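/- Let V be a complex inner product space and let d, δ : V → V be linear maps with ⟪d x, y⟫ = ⟪x, δ y⟫ for all x, y ∈ V and with d ∘ d = 0; set ∇ = d∘δ + δ∘d. Assume there is a family (W_i)_{i∈I} of finite-dimensional subspaces of V, pairwise orthogonal, each invariant under both d and δ, whose supremum (algebraic span) is all of V. Then the subspaces ker ∇, range d and range δ are pairwise orthogonal and V = ker ∇ + range d + range δ; that is, V decomposes as the orthogonal direct sum ker ∇ ⊕ range d ⊕ range δ (the Hodge decomposition). -/

import Mathlib

/-- The Hodge decomposition (Theorem 4.1, Condition 3, of the paper): if `V` is spanned by a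
family of pairwise orthogonal finite-dimensional subspaces, each invariant under the mutually
adjoint operators `d` and `δ` (with `d ∘ d = 0`), then `V` is the orthogonal direct sum of the
kernel of the Laplacian `∇ = dδ + δd`, the range of `d` and the range of `δ`. -/
theorem hodge_decomposition
    {V : Type*} [NormedAddCommGroup V] [InnerProductSpace ℂ V]
    (d δ : V →ₗ[ℂ] V)
    (hadj : ∀ x y : V, (inner ℂ (d x) y : ℂ) = inner ℂ x (δ y))
    (hd2 : d ∘ₗ d = 0)
    {I : Type*} (W : I → Submodule ℂ V)
    (hfin : ∀ i, FiniteDimensional ℂ (W i))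
    (horth : ∀ i j, i ≠ j → ∀ x ∈ W i, ∀ y ∈ W j, (inner ℂ x y : ℂ) = 0)
    (hdinv : ∀ i, ∀ x ∈ W i, d x ∈ W i)
    (hδinv : ∀ i, ∀ x ∈ W i, δ x ∈ W i)
    (hsup : (⨆ i, W i) = ⊤) :
    (∀ x ∈ LinearMap.ker (d ∘ₗ δ + δ ∘ₗ d), ∀ y ∈ LinearMap.range d, (inner ℂ x y : ℂ) = 0) ∧
    (∀ x ∈ LinearMap.ker (d ∘ₗ δ + δ ∘ₗ d), ∀ y ∈ LinearMap.range δ, (inner ℂ x y : ℂ) = 0) ∧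
    (∀ x ∈ LinearMap.range d, ∀ y ∈ LinearMap.range δ, (inner ℂ x y : ℂ) = 0) ∧
    LinearMap.ker (d ∘ₗ δ + δ ∘ₗ d) ⊔ LinearMap.range d ⊔ LinearMap.range δ = ⊤ := by
  set N : V →ₗ[ℂ] V := d ∘ₗ δ + δ ∘ₗ d with hNdef
  have hadj' : ∀ x y : V, (inner ℂ (δ x) y : ℂ) = inner ℂ x (d y) := by
    intro x y
    rw [← inner_conj_symm, ← hadj, inner_conj_symm]
  have hNapp : ∀ x : V, N x = d (δ x) + δ (d x) := by
    intro x; simp [hNdef]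
  have hNsym : ∀ x y : V, (inner ℂ (N x) y : ℂ) = inner ℂ x (N y) := by
    intro x y
    rw [hNapp, hNapp, inner_add_left, inner_add_right,
      hadj (δ x) y, ← hadj' x (δ y), hadj' (d x) y, ← hadj x (d y)]
  -- elements of the kernel of N are killed by both d and δ
  have hker : ∀ x : V, N x = 0 → d x = 0 ∧ δ x = 0 := by
    intro x hx
    have h0 : (inner ℂ (δ x) (δ x) : ℂ) + inner ℂ (d x) (d x) = 0 := by
      have h : (inner ℂ (N x) x : ℂ) = 0 := by rw [hx, inner_zero_left]
      rwa [hNapp, inner_add_left, hadj (δ x) x, hadj' (d x) x] at h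
    have hre : ‖δ x‖ ^ 2 + ‖d x‖ ^ 2 = 0 := by
      have := congrArg (fun z : ℂ => RCLike.re z) h0
      simpa [map_add, inner_self_eq_norm_sq, ← Complex.ofReal_pow, Complex.ofReal_re] using this
    have h1 : ‖d x‖ = 0 := by nlinarith [sq_nonneg ‖d x‖, sq_nonneg ‖δ x‖, norm_nonneg (d x)]
    have h2 : ‖δ x‖ = 0 := by nlinarith [sq_nonneg ‖d x‖, sq_nonneg ‖δ x‖, norm_nonneg (δ x)]
    exact ⟨norm_eq_zero.mp h1, norm_eq_zero.mp h2⟩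
  refine ⟨?_, ?_, ?_, ?_⟩
  · intro x hx y hy
    obtain ⟨z, rfl⟩ := hy
    have hdx : δ x = 0 := (hker x (LinearMap.mem_ker.mp hx)).2
    rw [← inner_conj_symm, hadj z x, hdx, inner_zero_right, map_zero]
  · intro x hx y hy
    obtain ⟨z, rfl⟩ := hy
    have hdx : d x = 0 := (hker x (LinearMap.mem_ker.mp hx)).1
    rw [← inner_conj_symm, hadj' z x, hdx, inner_zero_right, map_zero]
  · intro x hx y hy
    obtain ⟨a, rfl⟩ := hx
    obtain ⟨b, rfl⟩ := hy
    rw [← hadj (d a) b]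
    have : d (d a) = 0 := by
      have := congrFun (congrArg (fun f => f.toFun) hd2) a
      simpa using this
    rw [this, inner_zero_left]
  · -- spanning
    refine top_unique ?_
    rw [← hsup]
    refine iSup_le fun i => ?_
    haveI := hfin i
    have hNinv : ∀ x ∈ W i, N x ∈ W i := by
      intro x hx
      rw [hNapp]
      exact (W i).add_mem (hdinv i _ (hδinv i x hx)) (hδinv i _ (hdinv i x hx))
    set T : W i →ₗ[ℂ] W i := N.restrict hNinv with hTdef
    have hTcoe : ∀ x : W i, (T x : V) = N x := fun x => rfl
    have hTsym : ∀ x y : W i, (inner ℂ (T x) y : ℂ) = inner ℂ x (T y) := by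
      intro x y
      rw [Submodule.coe_inner, Submodule.coe_inner, hTcoe, hTcoe]
      exact hNsym x y
    have hcompl : LinearMap.range T ⊔ (LinearMap.range T)ᗮ = ⊤ :=
      Submodule.sup_orthogonal_of_hasOrthogonalProjection
    have horthker : (LinearMap.range T)ᗮ ≤ LinearMap.ker T := by
      intro y hy
      rw [LinearMap.mem_ker]
      have h1 : (inner ℂ (T (T y)) y : ℂ) = 0 :=
        (Submodule.mem_orthogonal _ y).mp hy _ ⟨T y, rfl⟩
      rw [hTsym (T y) y] at h1
      exact inner_self_eq_zero.mp h1
    intro x hx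
    have hx' : (⟨x, hx⟩ : W i) ∈ (⊤ : Submodule ℂ (W i)) := trivial
    rw [← hcompl] at hx'
    obtain ⟨a, ha, b, hb, hab⟩ := Submodule.mem_sup.mp hx'
    obtain ⟨c, rfl⟩ := ha
    have hb' : (b : V) ∈ LinearMap.ker N := by
      rw [LinearMap.mem_ker]
      have : T b = 0 := horthker hb
      have := congrArg (Subtype.val) this
      rw [hTcoe] at this
      simpa using this
    have hxeq : x = N (c : V) + (b : V) := by
      have := congrArg (Subtype.val) hab
      simpa [hTcoe] using this.symm
    rw [hxeq]
    refine Submodule.add_mem _ ?_ (Submodule.mem_sup_left (Submodule.mem_sup_left hb'))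
    rw [hNapp]
    exact Submodule.add_mem _
      (Submodule.mem_sup_left (Submodule.mem_sup_right ⟨δ c, rfl⟩))
      (Submodule.mem_sup_right ⟨d c, rfl⟩)
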